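/- Let M and K be symmetric positive definite n×n real matrices and α > 0. Consider the 2n×2n block matrix A = [[(1/α)M, −K],[K, M]] and the preconditioner P = (1/α)·[[I, −√α I],[√α I, α I]]·Diag(M+√α K, M+√α K). Then every eigenvalue λ of P⁻¹A satisfies |λ − 1| ≤ √2/2, and P⁻¹A is diagonalizable. -/

import Mathlib

open Matrix

private lemma aux_posDef_conj {n : ℕ} {A B : Matrix (Fin n) (Fin n) ℝ} (hA : A.PosDef)
    (hB : IsUnit B.det) : (Bᴴ * A * B).PosDef := by
  refine Matrix.PosDef.of_dotProduct_mulVec_pos (Matrix.isHermitian_conjTranspose_mul_mul B hA.1) fun x hx => ?_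
  have hinj : Function.Injective B.mulVec :=
    Matrix.mulVec_injective_iff_isUnit.mpr ((Matrix.isUnit_iff_isUnit_det B).mpr hB)
  have hBx : B *ᵥ x ≠ 0 := by
    intro h
    exact hx (hinj (by simpa using h))
  simpa only [Matrix.star_mulVec, Matrix.dotProduct_mulVec, Matrix.vecMul_vecMul] using
    hA.dotProduct_mulVec_pos hBx

private lemma aux_map_smul {m m' : Type*} (c : ℝ) (E : Matrix m m' ℝ) :
    (c • E).map (algebraMap ℝ ℂ) = (c : ℂ) • E.map (algebraMap ℝ ℂ) := by
  ext i j
  simp [Matrix.map_apply]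

set_option maxHeartbeats 2000000 in
theorem stmt_4 {n : ℕ} (M K : Matrix (Fin n) (Fin n) ℝ) (α : ℝ) (hα : 0 < α)
    (hM : M.PosDef) (hK : K.PosDef)
    (A P : Matrix (Fin n ⊕ Fin n) (Fin n ⊕ Fin n) ℝ)
    (hA : A = Matrix.fromBlocks (α⁻¹ • M) (-K) K M)
    (hP : P = α⁻¹ •
      (Matrix.fromBlocks (1 : Matrix (Fin n) (Fin n) ℝ) (-(Real.sqrt α • (1 : Matrix (Fin n) (Fin n) ℝ)))
          (Real.sqrt α • (1 : Matrix (Fin n) (Fin n) ℝ)) (α • (1 : Matrix (Fin n) (Fin n) ℝ)) *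
        Matrix.fromBlocks (M + Real.sqrt α • K) 0 0 (M + Real.sqrt α • K))) :
    (∀ lam ∈ spectrum ℂ ((P⁻¹ * A).map (algebraMap ℝ ℂ)),
        ‖lam - 1‖ ≤ Real.sqrt 2 / 2) ∧
    ∃ (C : Matrix (Fin n ⊕ Fin n) (Fin n ⊕ Fin n) ℂ) (d : Fin n ⊕ Fin n → ℂ),
      IsUnit C.det ∧ (P⁻¹ * A).map (algebraMap ℝ ℂ) = C * Matrix.diagonal d * C⁻¹ := by
  classical
  have hα0 : α ≠ 0 := ne_of_gt hα
  set s : ℝ := Real.sqrt α with hsdef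
  have hs : 0 < s := Real.sqrt_pos.mpr hα
  have hs0 : s ≠ 0 := ne_of_gt hs
  have hss : s * s = α := Real.mul_self_sqrt hα.le
  set T : Matrix (Fin n) (Fin n) ℝ := M + s • K with hTdef
  have hsK : (s • K).PosDef := by
    refine Matrix.PosDef.of_dotProduct_mulVec_pos ?_ fun x hx => ?_
    · show (s • K)ᴴ = s • K
      rw [conjTranspose_smul, hK.1.eq]
      simp
    · rw [smul_mulVec, dotProduct_smul, smul_eq_mul]
      exact mul_pos hs (hK.dotProduct_mulVec_pos hx)
  have hT : T.PosDef := hM.add hsK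
  set R : Matrix (Fin n) (Fin n) ℝ := (open scoped MatrixOrder in CFC.sqrt T) with hRdef
  have hRR : R * R = T := by
    open scoped MatrixOrder in exact CFC.sqrt_mul_sqrt_self T (Matrix.nonneg_iff_posSemidef.mpr hT.posSemidef)
  have hRH : R.IsHermitian := by
    open scoped MatrixOrder in exact (Matrix.nonneg_iff_posSemidef.mp (CFC.sqrt_nonneg T)).1
  have hRdet : IsUnit R.det := by
    have h1 : R.det * R.det = T.det := by rw [← det_mul, hRR]
    have hTd : (0:ℝ) < T.det := hT.det_pos
    have h2 : R.det ≠ 0 := by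
      intro h
      rw [h, mul_zero] at h1
      exact hTd.ne' h1.symm
    exact isUnit_iff_ne_zero.mpr h2
  set Ri : Matrix (Fin n) (Fin n) ℝ := R⁻¹ with hRidef
  have hRiR : Ri * R = 1 := nonsing_inv_mul R hRdet
  have hRRi : R * Ri = 1 := mul_nonsing_inv R hRdet
  have hRiH : Ri.IsHermitian := hRH.inv
  have hRidet : IsUnit Ri.det := by
    have h1 : Ri.det * R.det = 1 := by rw [← det_mul, hRiR, det_one]
    exact IsUnit.of_mul_eq_one _ h1
  set N : Matrix (Fin n) (Fin n) ℝ := M - s • K with hNdef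
  have hNH : N.IsHermitian := hM.1.sub hsK.1
  set Sh : Matrix (Fin n) (Fin n) ℝ := Ri * N * Ri with hShdef
  have hShH : Sh.IsHermitian := by
    have h := Matrix.isHermitian_conjTranspose_mul_mul Ri hNH
    rwa [hRiH.eq] at h
  have hRiTRi : Ri * T * Ri = 1 := by
    rw [← hRR, ← mul_assoc, hRiR, one_mul, hRRi]
  have hTN : T + N = M + M := by rw [hTdef, hNdef]; abel
  have hTNs : T - N = s • K + s • K := by rw [hTdef, hNdef]; abel
  have h1add : (1 : Matrix (Fin n) (Fin n) ℝ) + Sh = Ri * (M + M) * Ri := by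
    rw [← hTN, mul_add, add_mul, hRiTRi, hShdef]
  have h1sub : (1 : Matrix (Fin n) (Fin n) ℝ) - Sh = Ri * (s • K + s • K) * Ri := by
    rw [← hTNs, mul_sub, sub_mul, hRiTRi, hShdef]
  have hPD1 : ((1 : Matrix (Fin n) (Fin n) ℝ) + Sh).PosDef := by
    have h := aux_posDef_conj (hM.add hM) hRidet
    rw [hRiH.eq] at h
    rwa [h1add]
  have hPD2 : ((1 : Matrix (Fin n) (Fin n) ℝ) - Sh).PosDef := by
    have h := aux_posDef_conj (hsK.add hsK) hRidet
    rw [hRiH.eq] at h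
    rwa [h1sub]
  set μ : Fin n → ℝ := hShH.eigenvalues with hμdef
  have hbound : ∀ i, |μ i| ≤ 1 := by
    intro i
    set v : Fin n → ℝ := ⇑(hShH.eigenvectorBasis i) with hv
    have hv0 : v ≠ 0 := by
      have h := hShH.eigenvectorBasis.orthonormal.ne_zero i
      intro hcon
      apply h
      apply PiLp.ext
      intro j
      exact congrFun hcon j
    have hvv : 0 < star v ⬝ᵥ v := by
      have h1 := (Matrix.PosDef.one (n := Fin n) (R := ℝ)).dotProduct_mulVec_pos hv0
      simpa using h1
    have hSv : Sh *ᵥ v = μ i • v := hShH.mulVec_eigenvectorBasis i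
    have h1 := hPD1.dotProduct_mulVec_pos hv0
    have h2 := hPD2.dotProduct_mulVec_pos hv0
    rw [add_mulVec, one_mulVec, hSv, dotProduct_add, dotProduct_smul, smul_eq_mul] at h1
    rw [sub_mulVec, one_mulVec, hSv, dotProduct_sub, dotProduct_smul, smul_eq_mul] at h2
    rw [abs_le]
    constructor <;> nlinarith [hvv, h1, h2]
  set U : Matrix (Fin n) (Fin n) ℝ := (hShH.eigenvectorUnitary : Matrix (Fin n) (Fin n) ℝ)
    with hUdef
  have hUsU : U * star U = 1 := Matrix.mem_unitaryGroup_iff.mp hShH.eigenvectorUnitary.2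
  have hShU : Sh * U = U * diagonal μ := by
    have h := hShH.conjStarAlgAut_star_eigenvectorUnitary
    rw [Unitary.conjStarAlgAut_star_apply] at h
    have hco : (RCLike.ofReal ∘ μ : Fin n → ℝ) = μ := by
      rw [RCLike.ofReal_real_eq_id]; rfl
    rw [hco] at h
    calc Sh * U = (U * star U) * Sh * U := by rw [hUsU, one_mul]
      _ = U * (star U * Sh * U) := by simp only [mul_assoc]
      _ = U * diagonal μ := by rw [h]
  set Q : Matrix (Fin n) (Fin n) ℝ := Ri * U with hQdef
  set Q' : Matrix (Fin n) (Fin n) ℝ := star U * R with hQ'def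
  have hQQ' : Q * Q' = 1 := by
    calc Ri * U * (star U * R) = Ri * ((U * star U) * R) := by simp only [mul_assoc]
      _ = Ri * R := by rw [hUsU, one_mul]
      _ = 1 := hRiR
  have hTinv : T⁻¹ = Ri * Ri := by rw [← hRR, Matrix.mul_inv_rev]
  set S : Matrix (Fin n) (Fin n) ℝ := T⁻¹ * N with hSdef
  have hSQ : S * Q = Q * diagonal μ := by
    rw [hSdef, hTinv, hQdef]
    calc Ri * Ri * N * (Ri * U) = Ri * ((Ri * N * Ri) * U) := by simp only [mul_assoc]
      _ = Ri * (U * diagonal μ) := by rw [← hShdef, hShU]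
      _ = Ri * U * diagonal μ := by simp only [mul_assoc]
  -- inverse of P
  have hTdet : IsUnit T.det := hT.det_pos.ne'.isUnit
  have hTTi : T * T⁻¹ = 1 := mul_nonsing_inv T hTdet
  have hTiT : T⁻¹ * T = 1 := nonsing_inv_mul T hTdet
  set F : Matrix (Fin n ⊕ Fin n) (Fin n ⊕ Fin n) ℝ :=
    fromBlocks (α • (1 : Matrix (Fin n) (Fin n) ℝ)) (s • (1 : Matrix (Fin n) (Fin n) ℝ))
      (-(s • (1 : Matrix (Fin n) (Fin n) ℝ))) (1 : Matrix (Fin n) (Fin n) ℝ) with hFdef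
  set P' : Matrix (Fin n ⊕ Fin n) (Fin n ⊕ Fin n) ℝ :=
    (1/2 : ℝ) • (fromBlocks T⁻¹ 0 0 T⁻¹ * F) with hP'def
  have hWF : Matrix.fromBlocks (1 : Matrix (Fin n) (Fin n) ℝ)
      (-(s • (1 : Matrix (Fin n) (Fin n) ℝ))) (s • (1 : Matrix (Fin n) (Fin n) ℝ))
      (α • (1 : Matrix (Fin n) (Fin n) ℝ)) * F = (2*α) • 1 := by
    rw [hFdef, fromBlocks_multiply, ← fromBlocks_one (l := Fin n) (m := Fin n) (α := ℝ),
      fromBlocks_smul]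
    simp only [Matrix.one_mul, Matrix.mul_one, Matrix.neg_mul, Matrix.mul_neg, neg_neg,
      smul_mul_assoc, mul_smul_comm, smul_smul]
    refine Matrix.fromBlocks_inj.mpr ⟨?_, ?_, ?_, ?_⟩ <;>
      match_scalars <;> first | ring1 | linear_combination hss | linear_combination -hss
  have hPP' : P * P' = 1 := by
    rw [hP, hP'def, smul_mul_assoc, mul_smul_comm, smul_smul]
    have hmid : Matrix.fromBlocks (1 : Matrix (Fin n) (Fin n) ℝ)
        (-(s • (1 : Matrix (Fin n) (Fin n) ℝ))) (s • (1 : Matrix (Fin n) (Fin n) ℝ))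
        (α • (1 : Matrix (Fin n) (Fin n) ℝ)) * fromBlocks T 0 0 T *
        (fromBlocks T⁻¹ 0 0 T⁻¹ * F) = (2*α) • 1 := by
      rw [mul_assoc, ← mul_assoc (fromBlocks T 0 0 T), fromBlocks_multiply]
      simp only [Matrix.mul_zero, Matrix.zero_mul, add_zero, zero_add, hTTi]
      rw [fromBlocks_one, one_mul, hWF]
    rw [hmid, smul_smul]
    have : α⁻¹ * (1/2) * (2*α) = 1 := by field_simp
    rw [this, one_smul]
  have hPinv : P⁻¹ = P' := inv_eq_right_inv hPP'
  have hFA : F * A = fromBlocks T (s • N) (-(s⁻¹ • N)) T := by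
    rw [hA, hFdef, fromBlocks_multiply]
    simp only [Matrix.one_mul, Matrix.mul_one, Matrix.neg_mul, Matrix.mul_neg, neg_neg,
      smul_mul_assoc, mul_smul_comm, smul_smul, smul_neg]
    rw [hTdef, hNdef, ← hss]
    refine Matrix.fromBlocks_inj.mpr ⟨?_, ?_, ?_, ?_⟩ <;>
      match_scalars <;> field_simp <;> ring
  have hPA : P⁻¹ * A = (1/2 : ℝ) • fromBlocks 1 (s • S) (-(s⁻¹ • S)) 1 := by
    rw [hPinv, hP'def, smul_mul_assoc, mul_assoc, hFA, fromBlocks_multiply]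
    simp only [Matrix.mul_zero, Matrix.zero_mul, add_zero, zero_add, hTiT, mul_smul_comm,
      Matrix.mul_neg, smul_zero, neg_zero, ← hSdef]
  -- move to ℂ
  set Sc : Matrix (Fin n) (Fin n) ℂ := S.map (algebraMap ℝ ℂ) with hScdef
  set Qc : Matrix (Fin n) (Fin n) ℂ := Q.map (algebraMap ℝ ℂ) with hQcdef
  set Q'c : Matrix (Fin n) (Fin n) ℂ := Q'.map (algebraMap ℝ ℂ) with hQ'cdef
  set μc : Fin n → ℂ := fun k => (μ k : ℂ) with hμcdef
  set sc : ℂ := (s : ℂ) with hscdef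
  have hsc0 : sc ≠ 0 := by
    rw [hscdef]
    exact_mod_cast hs0
  have hdiagmap : (diagonal μ).map (algebraMap ℝ ℂ) = diagonal μc := by
    rw [diagonal_map (map_zero (algebraMap ℝ ℂ))]
    rfl
  have hSQc : Sc * Qc = Qc * diagonal μc := by
    rw [hScdef, hQcdef, ← Matrix.map_mul, hSQ, Matrix.map_mul, hdiagmap]
  have hQQc : Qc * Q'c = 1 := by
    rw [hQcdef, hQ'cdef, ← Matrix.map_mul, hQQ']
    simp
  have hX : (P⁻¹ * A).map (algebraMap ℝ ℂ) =
      (1/2 : ℂ) • fromBlocks 1 (sc • Sc) (-(sc⁻¹ • Sc)) 1 := by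
    have h12 : (((1:ℝ)/2 : ℝ) : ℂ) = (1/2 : ℂ) := by norm_num
    rw [hPA, aux_map_smul, fromBlocks_map, h12]
    congr 1
    refine Matrix.fromBlocks_inj.mpr ⟨?_, ?_, ?_, ?_⟩
    · exact Matrix.map_one _ (map_zero _) (map_one _)
    · rw [aux_map_smul, hscdef, hScdef]
    · have h1 : (-(s⁻¹ • S)) = (-s⁻¹) • S := by rw [neg_smul]
      rw [h1, aux_map_smul, hscdef, hScdef]
      push_cast
      rw [neg_smul]
    · exact Matrix.map_one _ (map_zero _) (map_one _)
  -- the eigenvector matrix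
  set Dg : Matrix (Fin n) (Fin n) ℂ := diagonal μc with hDgdef
  set C : Matrix (Fin n ⊕ Fin n) (Fin n ⊕ Fin n) ℂ :=
    fromBlocks (sc • Qc) (sc • Qc) (Complex.I • Qc) (-(Complex.I • Qc)) with hCdef
  set C' : Matrix (Fin n ⊕ Fin n) (Fin n ⊕ Fin n) ℂ :=
    fromBlocks ((2*sc)⁻¹ • Q'c) ((2*Complex.I)⁻¹ • Q'c)
      ((2*sc)⁻¹ • Q'c) (-((2*Complex.I)⁻¹ • Q'c)) with hC'def
  set d : Fin n ⊕ Fin n → ℂ :=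
    Sum.elim (fun k => (1 + Complex.I * μc k)/2) (fun k => (1 - Complex.I * μc k)/2) with hddef
  have hI0 : (2*Complex.I) ≠ 0 := by simp [Complex.I_ne_zero]
  have hCC' : C * C' = 1 := by
    rw [hCdef, hC'def, fromBlocks_multiply, ← fromBlocks_one (l := Fin n) (m := Fin n) (α := ℂ)]
    have e1 : sc • Qc * ((2*sc)⁻¹ • Q'c) + sc • Qc * ((2*sc)⁻¹ • Q'c) = 1 := by
      rw [smul_mul_assoc, mul_smul_comm, smul_smul, hQQc]
      rw [← add_smul]
      have : sc * (2*sc)⁻¹ + sc * (2*sc)⁻¹ = 1 := by field_simp; ring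
      rw [this, one_smul]
    have e2 : sc • Qc * ((2*Complex.I)⁻¹ • Q'c) + sc • Qc * (-((2*Complex.I)⁻¹ • Q'c)) = 0 := by
      rw [Matrix.mul_neg, add_neg_cancel]
    have e3 : Complex.I • Qc * ((2*sc)⁻¹ • Q'c) + -(Complex.I • Qc) * ((2*sc)⁻¹ • Q'c) = 0 := by
      rw [Matrix.neg_mul, add_neg_cancel]
    have e4 : Complex.I • Qc * ((2*Complex.I)⁻¹ • Q'c) +
        -(Complex.I • Qc) * (-((2*Complex.I)⁻¹ • Q'c)) = 1 := by
      rw [Matrix.neg_mul, Matrix.mul_neg, neg_neg, smul_mul_assoc, mul_smul_comm, smul_smul, hQQc]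
      rw [← add_smul]
      have : Complex.I * (2*Complex.I)⁻¹ + Complex.I * (2*Complex.I)⁻¹ = 1 := by
        field_simp
        ring
      rw [this, one_smul]
    rw [e1, e2, e3, e4]
  have hC'C : C' * C = 1 := mul_eq_one_comm.mp hCC'
  have hdetC : IsUnit C.det := by
    have h1 : C.det * C'.det = 1 := by rw [← det_mul, hCC', det_one]
    exact IsUnit.of_mul_eq_one _ h1
  have hCinv : C⁻¹ = C' := inv_eq_right_inv hCC'
  -- key identity
  have hD1 : diagonal (fun k => (1 + Complex.I * μc k)/2) =
      (1/2 : ℂ) • ((1 : Matrix (Fin n) (Fin n) ℂ) + Complex.I • Dg) := by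
    ext i j
    rcases eq_or_ne i j with h | h
    · subst h
      simp [hDgdef, Matrix.smul_apply, Matrix.one_apply_eq, Matrix.diagonal_apply_eq]
      ring
    · simp [hDgdef, Matrix.smul_apply, Matrix.one_apply_ne h, Matrix.diagonal_apply_ne _ h]
  have hD2 : diagonal (fun k => (1 - Complex.I * μc k)/2) =
      (1/2 : ℂ) • ((1 : Matrix (Fin n) (Fin n) ℂ) - Complex.I • Dg) := by
    ext i j
    rcases eq_or_ne i j with h | h
    · subst h
      simp [hDgdef, Matrix.smul_apply, Matrix.one_apply_eq, Matrix.diagonal_apply_eq]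
      ring
    · simp [hDgdef, Matrix.smul_apply, Matrix.one_apply_ne h, Matrix.diagonal_apply_ne _ h]
  have hdiagd : diagonal d = fromBlocks ((1/2 : ℂ) • (1 + Complex.I • Dg))
      ((0 : Matrix (Fin n) (Fin n) ℂ)) 0 ((1/2 : ℂ) • (1 - Complex.I • Dg)) := by
    rw [hddef, ← fromBlocks_diagonal, hD1, hD2]
  have hkey : ((P⁻¹ * A).map (algebraMap ℝ ℂ)) * C = C * diagonal d := by
    rw [hX, hCdef, hdiagd, smul_mul_assoc, fromBlocks_multiply, fromBlocks_multiply]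
    rw [fromBlocks_smul]
    simp only [Matrix.one_mul, Matrix.mul_zero, add_zero, zero_add, Matrix.mul_neg,
      Matrix.neg_mul, neg_neg, smul_mul_assoc, mul_smul_comm, smul_smul, Matrix.mul_add,
      Matrix.mul_sub, Matrix.mul_one, hSQc]
    refine Matrix.fromBlocks_inj.mpr ⟨?_, ?_, ?_, ?_⟩ <;> match_scalars <;> field_simp <;>
      ring_nf <;> simp [Complex.I_sq] <;> try ring
  have hXdec : (P⁻¹ * A).map (algebraMap ℝ ℂ) = C * diagonal d * C⁻¹ := by
    rw [hCinv, ← hkey, mul_assoc, hCC', mul_one]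
  refine ⟨?_, C, d, hdetC, hXdec⟩
  intro lam hlam
  rw [spectrum.mem_iff] at hlam
  have hdet0 : ¬ IsUnit ((algebraMap ℂ (Matrix (Fin n ⊕ Fin n) (Fin n ⊕ Fin n) ℂ) lam -
      (P⁻¹ * A).map (algebraMap ℝ ℂ)).det) := fun h => hlam ((Matrix.isUnit_iff_isUnit_det _).mpr h)
  have hconj : algebraMap ℂ (Matrix (Fin n ⊕ Fin n) (Fin n ⊕ Fin n) ℂ) lam -
      (P⁻¹ * A).map (algebraMap ℝ ℂ) = C * diagonal (fun i => lam - d i) * C' := by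
    have halg : algebraMap ℂ (Matrix (Fin n ⊕ Fin n) (Fin n ⊕ Fin n) ℂ) lam =
        C * (lam • (1 : Matrix (Fin n ⊕ Fin n) (Fin n ⊕ Fin n) ℂ)) * C' := by
      rw [mul_smul_comm, smul_mul_assoc, mul_one, hCC', Algebra.algebraMap_eq_smul_one]
    rw [hXdec, hCinv, halg, ← Matrix.sub_mul, ← Matrix.mul_sub]
    congr 2
    rw [Matrix.smul_one_eq_diagonal, diagonal_sub]
  rw [hconj, det_mul, det_mul, det_diagonal] at hdet0
  have hprod : ∏ i, (lam - d i) = 0 := by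
    by_contra h
    apply hdet0
    rw [isUnit_iff_ne_zero]
    refine mul_ne_zero (mul_ne_zero ?_ h) ?_
    · exact hdetC.ne_zero
    · have h1 : C.det * C'.det = 1 := by rw [← det_mul, hCC', det_one]
      intro h0
      rw [h0, mul_zero] at h1
      exact one_ne_zero h1.symm
  obtain ⟨i, -, hi⟩ := Finset.prod_eq_zero_iff.mp hprod
  have hlami : lam = d i := by
    have := sub_eq_zero.mp hi
    exact this
  rw [hlami]
  have habs : ∀ k : Fin n, ‖(1 + Complex.I * μc k)/2 - 1‖ ≤ Real.sqrt 2 / 2 ∧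
      ‖(1 - Complex.I * μc k)/2 - 1‖ ≤ Real.sqrt 2 / 2 := by
    intro k
    have hμ2 : (μ k)^2 ≤ 1 := by
      have := hbound k
      nlinarith [abs_nonneg (μ k), sq_abs (μ k), this]
    have hplus : ‖(1 + Complex.I * μc k)/2 - 1‖ = Real.sqrt ((μ k)^2 + 1) / 2 := by
      rw [show (1 + Complex.I * μc k)/2 - 1 = (Complex.I * μc k - 1)/2 by ring]
      rw [norm_div, Complex.norm_two]
      congr 1
      rw [Complex.norm_def, Complex.normSq_apply]
      simp [hμcdef]
      ring_nf
    have hminus : ‖(1 - Complex.I * μc k)/2 - 1‖ = Real.sqrt ((μ k)^2 + 1) / 2 := by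
      rw [show (1 - Complex.I * μc k)/2 - 1 = -((Complex.I * μc k + 1)/2) by ring]
      rw [norm_neg, norm_div, Complex.norm_two]
      congr 1
      rw [Complex.norm_def, Complex.normSq_apply]
      simp [hμcdef]
      ring_nf
    have hle : Real.sqrt ((μ k)^2 + 1) / 2 ≤ Real.sqrt 2 / 2 := by
      have h2 : Real.sqrt ((μ k)^2 + 1) ≤ Real.sqrt 2 := by
        apply Real.sqrt_le_sqrt
        nlinarith
      linarith
    constructor
    · rw [hplus]; exact hle
    · rw [hminus]; exact hle
  cases i with
  | inl k =>
    have := (habs k).1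
    simpa [hddef] using this
  | inr k =>
    have := (habs k).2
    simpa [hddef] using this
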